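/- Let $n=2m+1$ and $a_1,\ldots,a_n\in\{-1,1\}$ with autocorrelations $c_k=\sum_{j=1}^{n-k}a_ja_{j+k}$. Suppose $|c_k|\le 1$ for all even $k$ with $2\le k\le 2m$, and $4\mid c_k$ for all odd $k$ with $1\le k\le 2m-1$. Then $c_{2j}=(-1)^m$ for $j=1,\ldots,m$. -/

import Mathlib

open Finset

lemma shift_sum (a : ℕ → ℤ) (N t : ℕ) :
    ∑ i ∈ Icc 1 N, a (i + t) = ∑ i ∈ Icc (1 + t) (N + t), a i := by
  rw [← Finset.map_add_right_Icc, Finset.sum_map]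
  rfl

lemma glue_sum (a : ℕ → ℤ) (k n : ℕ) (hk : k ≤ n) :
    ∑ i ∈ Icc 1 k, a i + ∑ i ∈ Icc (k + 1) n, a i = ∑ i ∈ Icc 1 n, a i := by
  have h1 : Icc 1 k = Ioc 0 k := by rw [← Finset.Icc_add_one_left_eq_Ioc]; rfl
  have h2 : Icc (k + 1) n = Ioc k n := by rw [← Finset.Icc_add_one_left_eq_Ioc]
  have h3 : Icc 1 n = Ioc 0 n := by rw [← Finset.Icc_add_one_left_eq_Ioc]; rfl
  rw [h1, h2, h3, Finset.sum_Ioc_consecutive _ (Nat.zero_le k) hk]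

theorem stmt4 (m n : ℕ) (hm : 1 ≤ m) (hn : n = 2 * m + 1) (a : ℕ → ℤ)
    (ha : ∀ j ∈ Icc 1 n, a j = 1 ∨ a j = -1)
    (c : ℕ → ℤ) (hc : ∀ k, c k = ∑ j ∈ Icc 1 (n - k), a j * a (j + k))
    (heven : ∀ k, 2 ≤ k → k ≤ 2 * m → Even k → |c k| ≤ 1)
    (hodd : ∀ k, 1 ≤ k → k ≤ 2 * m - 1 → Odd k → (4 : ℤ) ∣ c k) :
    ∀ j, 1 ≤ j → j ≤ m → c (2 * j) = (-1 : ℤ) ^ m := by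
  intro j hj1 hjm
  set k := 2 * j with hkdef
  have hk2 : 2 ≤ k := by omega
  have hkn : k ≤ n := by omega
  have hnk : n - k = 2 * (m - j) + 1 := by omega
  -- c k ≡ sum of (a i + a (i+k) - 1) mod 4
  have prodcong : ∀ (N t : ℕ), N + t ≤ n →
      (4:ℤ) ∣ (∑ i ∈ Icc 1 N, a i * a (i + t)) - ∑ i ∈ Icc 1 N, (a i + a (i + t) - 1) := by
    intro N t hNt
    rw [← Finset.sum_sub_distrib]
    apply Finset.dvd_sum
    intro i hi
    rw [Finset.mem_Icc] at hi
    have h1 := ha i (by rw [Finset.mem_Icc]; omega)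
    have h2 := ha (i + t) (by rw [Finset.mem_Icc]; omega)
    rcases h1 with h | h <;> rcases h2 with h' | h' <;> rw [h, h'] <;> decide
  have d1 : (4:ℤ) ∣ c k - ∑ i ∈ Icc 1 (n - k), (a i + a (i + k) - 1) := by
    rw [hc]; exact prodcong (n - k) k (by omega)
  have d2 : (4:ℤ) ∣ c (n - k) - ∑ i ∈ Icc 1 k, (a i + a (i + (n - k)) - 1) := by
    rw [hc]
    have : n - (n - k) = k := by omega
    rw [this]
    exact prodcong k (n - k) (by omega)
  set S := ∑ i ∈ Icc 1 n, a i with hS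
  -- the two sums add to 2S - n
  have sumid : (∑ i ∈ Icc 1 (n - k), (a i + a (i + k) - 1))
      + ∑ i ∈ Icc 1 k, (a i + a (i + (n - k)) - 1) = 2 * S - n := by
    have e1 : ∑ i ∈ Icc 1 (n - k), a (i + k) = ∑ i ∈ Icc (k + 1) n, a i := by
      rw [shift_sum]
      congr 1
      congr 1 <;> omega
    have e2 : ∑ i ∈ Icc 1 k, a (i + (n - k)) = ∑ i ∈ Icc (n - k + 1) n, a i := by
      rw [shift_sum]
      congr 1
      congr 1 <;> omega
    simp only [Finset.sum_sub_distrib, Finset.sum_add_distrib, e1, e2,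
      Finset.sum_const, Nat.card_Icc, nsmul_eq_mul, mul_one]
    have g1 := glue_sum a k n hkn
    have g2 := glue_sum a (n - k) n (by omega)
    have ek1 : (k + 1 - 1 : ℕ) = k := by omega
    have ek2 : (n - k + 1 - 1 : ℕ) = n - k := by omega
    rw [ek1, ek2, Nat.cast_sub hkn]
    linarith [g1, g2, hS]
  -- parity: 4 ∣ 2S - 2n
  have spar : (2:ℤ) ∣ S - n := by
    have : S - n = ∑ i ∈ Icc 1 n, (a i - 1) := by
      rw [hS, Finset.sum_sub_distrib, Finset.sum_const, Nat.card_Icc, nsmul_eq_mul, mul_one]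
      have : (n + 1 - 1 : ℕ) = n := by omega
      rw [this]
    rw [this]
    apply Finset.dvd_sum
    intro i hi
    rcases ha i hi with h | h <;> rw [h] <;> decide
  -- 4 ∣ c (n-k)
  have dodd : (4:ℤ) ∣ c (n - k) := by
    apply hodd (n - k) (by omega) (by omega)
    rw [hnk]; exact ⟨m - j, by omega⟩
  -- |c k| ≤ 1
  have habs : |c k| ≤ 1 := heven k hk2 (by omega) ⟨j, by omega⟩
  have habs' : -1 ≤ c k ∧ c k ≤ 1 := abs_le.mp habs
  have key : (4:ℤ) ∣ c k - n := by
    have h4 : (4:ℤ) ∣ 2 * (S - n) := by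
      obtain ⟨t, ht⟩ := spar
      exact ⟨t, by rw [ht]; ring⟩
    have := dvd_sub (dvd_add d1 d2) dodd
    have h5 : c k - ∑ i ∈ Icc 1 (n - k), (a i + a (i + k) - 1)
        + (c (n - k) - ∑ i ∈ Icc 1 k, (a i + a (i + (n - k)) - 1)) - c (n - k)
        = c k - (2 * S - n) := by rw [← sumid]; ring
    rw [h5] at this
    have h6 : c k - n = c k - (2 * S - n) + 2 * (S - n) - 2 * (n : ℤ) + 2 * n := by ring
    rw [h6]
    have h7 : (4:ℤ) ∣ (- (2 * (n:ℤ)) + 2 * n) := by simp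
    have := dvd_add (dvd_add this h4) h7
    convert this using 1
    · rfl
    ring
  obtain ⟨t, ht⟩ := key
  rcases Nat.even_or_odd m with hme | hmo
  · rw [hme.neg_one_pow]
    obtain ⟨p, hp⟩ := hme
    have hni : (n:ℤ) = 2 * m + 1 := by exact_mod_cast congrArg Nat.cast hn
    omega
  · rw [hmo.neg_one_pow]
    obtain ⟨p, hp⟩ := hmo
    have hni : (n:ℤ) = 2 * m + 1 := by exact_mod_cast congrArg Nat.cast hn
    omega
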